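/- (von Neumann trace inequality) For complex m×m matrices Φ and Λ, Re tr(Φ Λ*) ≤ Σ_{k=1}^m σ_k(Φ) σ_k(Λ), where σ_k denotes the k-th largest singular value. -/

import Mathlib

open Matrix Finset
open scoped ComplexOrder

/-- The shift operator Δ(e^{iθ}) = [I_m, e^{iθ}I_m, ..., e^{inθ}I_m]. -/
noncomputable def Delta (m n : ℕ) (θ : ℝ) : Matrix (Fin m) (Fin (n+1) × Fin m) ℂ :=
  fun i p => Complex.exp (Complex.I * (p.1 : ℕ) * θ) * (if i = p.2 then 1 else 0)

/-- D_0(X) = Σ_h X_{hh} (sum of diagonal blocks). -/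
def Dop0 {m n : ℕ} (X : Matrix (Fin (n+1) × Fin m) (Fin (n+1) × Fin m) ℝ) :
    Matrix (Fin m) (Fin m) ℝ :=
  fun a b => ∑ h : Fin (n+1), X (h, a) (h, b)

/-- D_j(X) = 2 Σ_h X_{h, h+j}, for j ≥ 1. -/
def DopJ {m n : ℕ} (X : Matrix (Fin (n+1) × Fin m) (Fin (n+1) × Fin m) ℝ) (j : ℕ) :
    Matrix (Fin m) (Fin m) ℝ :=
  fun a b => 2 * ∑ h : Fin (n+1), ∑ k : Fin (n+1),
    if (k : ℕ) = (h : ℕ) + j then X (h, a) (k, b) else 0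

/-- Symmetric block Toeplitz matrix with first block row Y. -/
def Tobl {m n : ℕ} (Y : Fin (n+1) → Matrix (Fin m) (Fin m) ℝ) :
    Matrix (Fin (n+1) × Fin m) (Fin (n+1) × Fin m) ℝ :=
  fun p q =>
    if (p.1 : ℕ) ≤ (q.1 : ℕ) then
      Y ⟨(q.1 : ℕ) - (p.1 : ℕ), lt_of_le_of_lt (Nat.sub_le _ _) q.1.isLt⟩ p.2 q.2
    else
      Y ⟨(p.1 : ℕ) - (q.1 : ℕ), lt_of_le_of_lt (Nat.sub_le _ _) p.1.isLt⟩ q.2 p.2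

/-- Singular values of a square complex matrix (unsorted): square roots of
the eigenvalues of AᴴA. -/
noncomputable def singularValues {m : ℕ} (A : Matrix (Fin m) (Fin m) ℂ) : Fin m → ℝ :=
  fun i => Real.sqrt ((Matrix.posSemidef_conjTranspose_mul_self A).1.eigenvalues i)

/-- The k-th largest singular value (k = 0 gives the largest). -/
noncomputable def sdesc {m : ℕ} (A : Matrix (Fin m) (Fin m) ℂ) : Fin m → ℝ :=
  fun i => (singularValues A ∘ Tuple.sort (singularValues A)) i.rev

/-- Largest singular value (operator norm). -/
noncomputable def opNorm {m : ℕ} (A : Matrix (Fin m) (Fin m) ℂ) : ℝ :=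
  ⨆ i, singularValues A i

lemma singularValues_nonneg {m : ℕ} (A : Matrix (Fin m) (Fin m) ℂ) (i : Fin m) :
    0 ≤ singularValues A i := Real.sqrt_nonneg _

lemma sdesc_nonneg {m : ℕ} (A : Matrix (Fin m) (Fin m) ℂ) (i : Fin m) :
    0 ≤ sdesc A i := Real.sqrt_nonneg _

lemma sdesc_antitone {m : ℕ} (A : Matrix (Fin m) (Fin m) ℂ) : Antitone (sdesc A) := by
  intro i j hij
  exact Tuple.monotone_sort (singularValues A) (Fin.rev_le_rev.mpr hij)

lemma exists_perm_sdesc {m : ℕ} (A : Matrix (Fin m) (Fin m) ℂ) :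
    ∃ c : Equiv.Perm (Fin m), ∀ j, singularValues A j = sdesc A (c j) := by
  refine ⟨(Tuple.sort (singularValues A)).symm.trans (Fin.revPerm), fun j => ?_⟩
  simp [sdesc, Fin.rev_rev]

-- key combinatorial lemma
lemma key_lemma {m : ℕ} (f g : Fin m → ℝ) (hf : Antitone f) (hg : Antitone g)
    (S : Matrix (Fin m) (Fin m) ℝ) (hS : S ∈ doublyStochastic ℝ (Fin m))
    (α β : Equiv.Perm (Fin m)) :
    ∑ i : Fin m, ∑ j : Fin m, f (α i) * g (β j) * S i j ≤ ∑ k : Fin m, f k * g k := by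
  obtain ⟨w, hw0, hw1, hwS⟩ := exists_eq_sum_perm_of_mem_doublyStochastic hS
  have hmono : Monovary f g := by
    intro i j hgij
    rcases le_total i j with h | h
    · exact absurd (hg h) (not_le.mpr hgij)
    · exact hf h
  have hSij : ∀ i j, S i j = ∑ π : Equiv.Perm (Fin m), w π * (π.permMatrix ℝ) i j := by
    intro i j
    rw [← hwS]
    simp [Matrix.sum_apply]
  have step1 : ∀ π : Equiv.Perm (Fin m), w π * ∑ i : Fin m, f (α i) * g (β (π i))
      = ∑ i : Fin m, ∑ j : Fin m, f (α i) * g (β j) * (w π * (π.permMatrix ℝ) i j) := by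
    intro π
    rw [Finset.mul_sum]
    refine Finset.sum_congr rfl fun i _ => ?_
    simp only [Equiv.Perm.permMatrix, PEquiv.toMatrix_apply, Equiv.toPEquiv_apply,
      Option.mem_def, Option.some.injEq, mul_ite, mul_one, mul_zero]
    rw [Finset.sum_ite_eq Finset.univ (π i)
      (fun j => f (α i) * g (β j) * w π)]
    simp only [Finset.mem_univ, if_true]
    ring
  calc ∑ i : Fin m, ∑ j : Fin m, f (α i) * g (β j) * S i j
      = ∑ i : Fin m, ∑ j : Fin m, ∑ π : Equiv.Perm (Fin m),
          f (α i) * g (β j) * (w π * (π.permMatrix ℝ) i j) := by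
        simp_rw [hSij, Finset.mul_sum]
    _ = ∑ π : Equiv.Perm (Fin m), ∑ i : Fin m, ∑ j : Fin m,
          f (α i) * g (β j) * (w π * (π.permMatrix ℝ) i j) := by
        refine Eq.trans (Finset.sum_congr rfl fun i _ => Finset.sum_comm) Finset.sum_comm
    _ = ∑ π : Equiv.Perm (Fin m), w π * ∑ i : Fin m, f (α i) * g (β (π i)) :=
        Finset.sum_congr rfl fun π _ => (step1 π).symm
    _ ≤ ∑ π : Equiv.Perm (Fin m), w π * ∑ k : Fin m, f k * g k := by
        refine Finset.sum_le_sum fun π _ => mul_le_mul_of_nonneg_left ?_ (hw0 π)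
        have h1 : ∑ i : Fin m, f (α i) * g (β (π i))
            = ∑ k : Fin m, f k * g ((α.symm.trans (π.trans β)) k) := by
          rw [← Equiv.sum_comp α (fun k => f k * g ((α.symm.trans (π.trans β)) k))]
          simp
        rw [h1]
        simpa [smul_eq_mul] using hmono.sum_smul_comp_perm_le_sum_smul
          (σ := (α.symm.trans (π.trans β)))
    _ = ∑ k : Fin m, f k * g k := by rw [← Finset.sum_mul, hw1, one_mul]

lemma svd_exists {m : ℕ} (Φ : Matrix (Fin m) (Fin m) ℂ) :
    ∃ U V : Matrix (Fin m) (Fin m) ℂ, U ∈ Matrix.unitaryGroup (Fin m) ℂ ∧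
      V ∈ Matrix.unitaryGroup (Fin m) ℂ ∧
      Φ = U * Matrix.diagonal (fun i => (singularValues Φ i : ℂ)) * Vᴴ := by
  classical
  set hPSD := Matrix.posSemidef_conjTranspose_mul_self Φ with hPSDdef
  set hH := hPSD.1 with hHdef
  set μ := hH.eigenvalues with hμdef
  have hμ0 : ∀ i, 0 ≤ μ i := hPSD.eigenvalues_nonneg
  set V : Matrix (Fin m) (Fin m) ℂ := (hH.eigenvectorUnitary : Matrix (Fin m) (Fin m) ℂ)
    with hVdef
  have hV : V ∈ Matrix.unitaryGroup (Fin m) ℂ := hH.eigenvectorUnitary.2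
  -- columns
  set v : Fin m → (Fin m → ℂ) := fun j => ⇑(hH.eigenvectorBasis j) with hvdef
  have hmul : ∀ j, (Φᴴ * Φ) *ᵥ (v j) = (μ j : ℂ) • v j := by
    intro j
    simpa [Matrix.mulVec_smul] using hH.mulVec_eigenvectorBasis j
  set w : Fin m → (Fin m → ℂ) := fun j => Φ *ᵥ v j with hwdef
  have hinner : ∀ j k, dotProduct (star (w j)) (w k)
      = if j = k then (μ k : ℂ) else 0 := by
    intro j k
    have h1 : dotProduct (star (w j)) (w k)
        = dotProduct (star (v j)) ((Φᴴ * Φ) *ᵥ v k) := by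
      conv_rhs => rw [← Matrix.mulVec_mulVec, dotProduct_mulVec, ← Matrix.star_mulVec]
    have h2 : dotProduct (star (v j)) (v k) = if j = k then 1 else 0 := by
      have := hH.eigenvectorBasis.orthonormal
      rw [orthonormal_iff_ite] at this
      have h3 := this j k
      rw [EuclideanSpace.inner_eq_star_dotProduct] at h3
      simpa [dotProduct, mul_comm] using h3
    rw [h1, hmul k, dotProduct_smul, h2]
    simp [mul_ite]
  set σv : Fin m → ℝ := fun i => Real.sqrt (μ i) with hσdef
  have hσ : singularValues Φ = σv := rfl
  set s : Set (Fin m) := {j | μ j ≠ 0} with hsdef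
  set u : Fin m → EuclideanSpace ℂ (Fin m) := fun j =>
    ((σv j : ℂ)⁻¹) • (WithLp.equiv 2 _).symm (w j) with hudef
  have hσ_ne : ∀ j ∈ s, (σv j : ℂ) ≠ 0 := by
    intro j hj
    simp only [hσdef, ne_eq, Complex.ofReal_eq_zero]
    exact fun hc => hj ((Real.sqrt_eq_zero (hμ0 j)).mp hc)
  have hortho : Orthonormal ℂ (s.restrict u) := by
    rw [orthonormal_iff_ite]
    rintro ⟨j, hj⟩ ⟨k, hk⟩
    change inner ℂ (u j) (u k) = _
    simp only [hudef]
    rw [inner_smul_left, inner_smul_right, EuclideanSpace.inner_eq_star_dotProduct]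
    simp only [WithLp.equiv_symm_apply, WithLp.ofLp_toLp]
    rw [dotProduct_comm, hinner]
    by_cases h : j = k
    · subst h
      have h1 : ((σv j : ℂ))⁻¹ ≠ 0 := inv_ne_zero (hσ_ne j hj)
      have h2 : (starRingEnd ℂ) ((σv j : ℂ))⁻¹ = ((σv j : ℂ))⁻¹ := by
        simp [Complex.conj_ofReal]
      have h3 : (σv j : ℂ) * (σv j : ℂ) = (μ j : ℂ) := by
        rw [← Complex.ofReal_mul]
        norm_cast
        exact Real.mul_self_sqrt (hμ0 j)
      simp only [if_pos rfl, h2]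
      rw [← h3]
      field_simp
      simp [hσ_ne j hj]
    · simp [h, Subtype.mk.injEq]
  obtain ⟨b, hb⟩ := hortho.exists_orthonormalBasis_extension_of_card_eq (by simp)
  set U : Matrix (Fin m) (Fin m) ℂ := fun i j => (WithLp.equiv 2 _ (b j)) i with hUdef
  have hU : U ∈ Matrix.unitaryGroup (Fin m) ℂ := by
    rw [Matrix.mem_unitaryGroup_iff']
    ext j k
    have horth := b.orthonormal
    rw [orthonormal_iff_ite] at horth
    have h3 := horth j k
    rw [EuclideanSpace.inner_eq_star_dotProduct] at h3
    rw [Matrix.mul_apply]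
    simp only [Matrix.star_apply]
    simpa [Matrix.mul_apply, Matrix.one_apply, dotProduct, hUdef,
      Matrix.conjTranspose_apply, Matrix.star_apply, Pi.star_apply, mul_comm] using h3
  have key : Φ * V = U * Matrix.diagonal (fun i => (σv i : ℂ)) := by
    ext i j
    have hcol : (Φ * V) i j = w j i := by
      simp only [hwdef, Matrix.mul_apply, Matrix.mulVec, dotProduct, hVdef, hvdef]
      rfl
    rw [hcol, Matrix.mul_diagonal]
    by_cases h : μ j = 0
    · have hw0 : star (w j) ⬝ᵥ (w j) = 0 := by rw [hinner j j]; simp [h]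
      have hwj : w j = 0 := dotProduct_star_self_eq_zero.mp hw0
      have hσ0 : σv j = 0 := by simp [hσdef, h]
      simp [hwj, hσ0]
    · have hbj : b j = u j := hb j h
      have hne : (σv j : ℂ) ≠ 0 := hσ_ne j h
      rw [hUdef]
      simp only [hbj, hudef]
      have : (WithLp.equiv 2 (Fin m → ℂ)) (((σv j : ℂ))⁻¹ • (WithLp.equiv 2 _).symm (w j)) i
          = ((σv j : ℂ))⁻¹ * w j i := rfl
      rw [this]
      field_simp
  refine ⟨U, V, hU, hV, ?_⟩
  have hVV : V * Vᴴ = 1 := Matrix.mem_unitaryGroup_iff.mp hV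
  calc Φ = Φ * (V * Vᴴ) := by rw [hVV, Matrix.mul_one]
    _ = (Φ * V) * Vᴴ := by rw [Matrix.mul_assoc]
    _ = U * Matrix.diagonal (fun i => (singularValues Φ i : ℂ)) * Vᴴ := by rw [key, hσ]

-- unitary row/col sums of |entries|²
lemma unitary_row_sum {m : ℕ} {A : Matrix (Fin m) (Fin m) ℂ}
    (hA : A ∈ Matrix.unitaryGroup (Fin m) ℂ) (i : Fin m) :
    ∑ j : Fin m, Complex.normSq (A i j) = 1 := by
  have h := Matrix.mem_unitaryGroup_iff.mp hA
  have h2 : (A * star A) i i = 1 := by rw [h]; simp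
  rw [Matrix.mul_apply] at h2
  have h3 : ∑ j : Fin m, ((Complex.normSq (A i j) : ℂ)) = 1 := by
    rw [← h2]
    refine Finset.sum_congr rfl fun j _ => ?_
    rw [Matrix.star_apply, Matrix.star_eq_conjTranspose] at *
    simp [Matrix.conjTranspose_apply, Complex.mul_conj]
  have := congrArg Complex.re h3
  simpa using this

lemma unitary_col_sum {m : ℕ} {A : Matrix (Fin m) (Fin m) ℂ}
    (hA : A ∈ Matrix.unitaryGroup (Fin m) ℂ) (j : Fin m) :
    ∑ i : Fin m, Complex.normSq (A i j) = 1 := by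
  have h := unitary_row_sum (Unitary.star_mem hA) j
  simpa [Matrix.star_eq_conjTranspose, Matrix.conjTranspose_apply] using h


/-- von Neumann trace inequality:
`Re tr(Φ Λ*) ≤ Σ_k σ_k(Φ) σ_k(Λ)` with singular values in decreasing order. -/
theorem stmt_12 (m : ℕ) (Φ Λ : Matrix (Fin m) (Fin m) ℂ) :
    (Φ * Λᴴ).trace.re ≤ ∑ k : Fin m, sdesc Φ k * sdesc Λ k := by
  classical
  obtain ⟨U₁, V₁, hU₁, hV₁, hΦ⟩ := svd_exists Φ
  obtain ⟨U₂, V₂, hU₂, hV₂, hΛ⟩ := svd_exists Λ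
  set σ : Fin m → ℝ := singularValues Φ with hσdef
  set τ : Fin m → ℝ := singularValues Λ with hτdef
  set D₁ : Matrix (Fin m) (Fin m) ℂ := Matrix.diagonal (fun i => (σ i : ℂ)) with hD₁
  set D₂ : Matrix (Fin m) (Fin m) ℂ := Matrix.diagonal (fun i => (τ i : ℂ)) with hD₂
  set A : Matrix (Fin m) (Fin m) ℂ := V₁ᴴ * V₂ with hAdef
  set B : Matrix (Fin m) (Fin m) ℂ := U₂ᴴ * U₁ with hBdef
  have hA : A ∈ Matrix.unitaryGroup (Fin m) ℂ := by
    rw [hAdef, ← Matrix.star_eq_conjTranspose]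
    exact mul_mem (Unitary.star_mem hV₁) hV₂
  have hB : B ∈ Matrix.unitaryGroup (Fin m) ℂ := by
    rw [hBdef, ← Matrix.star_eq_conjTranspose]
    exact mul_mem (Unitary.star_mem hU₂) hU₁
  have hD₂star : D₂ᴴ = D₂ := by
    have hst : (star fun i : Fin m => ((τ i : ℝ) : ℂ)) = fun i : Fin m => ((τ i : ℝ) : ℂ) := by
      funext i
      exact Complex.conj_ofReal (τ i)
    rw [hD₂, Matrix.diagonal_conjTranspose, hst]
  have e1 : Φ * Λᴴ = U₁ * ((D₁ * A * D₂) * U₂ᴴ) := by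
    rw [hΦ, hΛ, Matrix.conjTranspose_mul, Matrix.conjTranspose_mul,
      Matrix.conjTranspose_conjTranspose, hD₂star, hAdef]
    simp only [Matrix.mul_assoc]
  have e2 : (Φ * Λᴴ).trace = (D₁ * A * D₂ * B).trace := by
    rw [e1, Matrix.trace_mul_comm U₁, Matrix.mul_assoc, hBdef]
  have e3 : (D₁ * A * D₂ * B).trace
      = ∑ i : Fin m, ∑ j : Fin m, ((σ i * τ j : ℝ) : ℂ) * (A i j * B j i) := by
    rw [Matrix.trace]
    refine Finset.sum_congr rfl fun i _ => ?_
    rw [Matrix.diag_apply, Matrix.mul_apply]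
    refine Finset.sum_congr rfl fun j _ => ?_
    rw [hD₁, hD₂, Matrix.mul_diagonal, Matrix.diagonal_mul]
    push_cast
    ring
  set S : Matrix (Fin m) (Fin m) ℝ :=
    fun i j => (Complex.normSq (A i j) + Complex.normSq (B j i)) / 2 with hSdef
  have hS : S ∈ doublyStochastic ℝ (Fin m) := by
    rw [mem_doublyStochastic_iff_sum]
    refine ⟨fun i j => div_nonneg (add_nonneg (Complex.normSq_nonneg _) (Complex.normSq_nonneg _)) (by norm_num), fun i => ?_, fun j => ?_⟩
    · simp only [hSdef]
      rw [← Finset.sum_div, Finset.sum_add_distrib, unitary_row_sum hA i,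
        unitary_col_sum hB i]
      norm_num
    · simp only [hSdef]
      rw [← Finset.sum_div, Finset.sum_add_distrib, unitary_col_sum hA j,
        unitary_row_sum hB j]
      norm_num
  have hσ0 : ∀ i, 0 ≤ σ i := singularValues_nonneg Φ
  have hτ0 : ∀ i, 0 ≤ τ i := singularValues_nonneg Λ
  have step : (Φ * Λᴴ).trace.re ≤ ∑ i : Fin m, ∑ j : Fin m, σ i * τ j * S i j := by
    rw [e2, e3]
    rw [Complex.re_sum]
    refine Finset.sum_le_sum fun i _ => ?_
    rw [Complex.re_sum]
    refine Finset.sum_le_sum fun j _ => ?_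
    rw [Complex.re_ofReal_mul]
    refine mul_le_mul_of_nonneg_left ?_ (mul_nonneg (hσ0 i) (hτ0 j))
    refine le_trans (Complex.re_le_norm _) ?_
    rw [norm_mul]
    simp only [hSdef]
    nlinarith [Complex.sq_norm (A i j), Complex.sq_norm (B j i),
      sq_nonneg (‖A i j‖ - ‖B j i‖),
      norm_nonneg (A i j), norm_nonneg (B j i)]
  obtain ⟨α, hα⟩ := exists_perm_sdesc Φ
  obtain ⟨β, hβ⟩ := exists_perm_sdesc Λ
  refine le_trans step ?_
  have : ∑ i : Fin m, ∑ j : Fin m, σ i * τ j * S i j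
      = ∑ i : Fin m, ∑ j : Fin m, sdesc Φ (α i) * sdesc Λ (β j) * S i j := by
    refine Finset.sum_congr rfl fun i _ => Finset.sum_congr rfl fun j _ => ?_
    rw [← hα i, ← hβ j]
  rw [this]
  exact key_lemma (sdesc Φ) (sdesc Λ) (sdesc_antitone Φ) (sdesc_antitone Λ) S hS α β
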